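/- If λ_i ≠ λ_i^{-1} for all i and the polynomials x^{m_1}−λ_1,…,x^{m_ℓ}−λ_ℓ are pairwise coprime in F_q[x], then every Λ-multi-twisted code of length n over F_q is LCD. -/

import Mathlib

open Finset

/-- The `Λ`-multi-twisted shift on `F^n = ∏ i, F^{m i}`. -/
def mtShift {F : Type*} [Field F] {ℓ : ℕ} (m : Fin ℓ → ℕ) (hm : ∀ i, 0 < m i)
    (Λ : Fin ℓ → F) (c : ∀ i, Fin (m i) → F) : ∀ i, Fin (m i) → F :=
  fun i j =>
    if (j : ℕ) = 0 then Λ i * c i ⟨m i - 1, Nat.sub_lt (hm i) Nat.one_pos⟩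
    else c i ⟨(j : ℕ) - 1, lt_of_le_of_lt (Nat.sub_le _ _) j.isLt⟩

/-- The standard inner product on `F^n = ∏ i, F^{m i}`. -/
def mtInner {F : Type*} [Field F] {ℓ : ℕ} (m : Fin ℓ → ℕ)
    (a b : ∀ i, Fin (m i) → F) : F :=
  ∑ i, ∑ j, a i j * b i j

/-- The dual code `C^⊥` with respect to the standard inner product. -/
def mtDual {F : Type*} [Field F] {ℓ : ℕ} {m : Fin ℓ → ℕ}
    (C : Submodule F (∀ i, Fin (m i) → F)) : Submodule F (∀ i, Fin (m i) → F) where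
  carrier := {a | ∀ c ∈ C, mtInner m a c = 0}
  zero_mem' := by intro c hc; simp [mtInner]
  add_mem' := by
    intro a b ha hb c hc
    have h1 := ha c hc
    have h2 := hb c hc
    simp only [mtInner, Pi.add_apply, add_mul, Finset.sum_add_distrib] at h1 h2 ⊢
    rw [h1, h2, add_zero]
  smul_mem' := by
    intro t a ha c hc
    have h1 := ha c hc
    simp only [mtInner, Pi.smul_apply, smul_eq_mul, mul_assoc, ← Finset.mul_sum] at h1 ⊢
    rw [h1, mul_zero]

section MTAux
open Polynomial

variable {F : Type*} [Field F]

def sbL (m : ℕ) (hm : 0 < m) (lam : F) : (Fin m → F) →ₗ[F] (Fin m → F) where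
  toFun b := fun j =>
    if (j : ℕ) = 0 then lam * b ⟨m - 1, Nat.sub_lt hm Nat.one_pos⟩
    else b ⟨(j : ℕ) - 1, lt_of_le_of_lt (Nat.sub_le _ _) j.isLt⟩
  map_add' x y := by
    funext j; by_cases h : (j : ℕ) = 0 <;> simp [h, mul_add]
  map_smul' r x := by
    funext j; by_cases h : (j : ℕ) = 0 <;> simp [h, mul_left_comm]

def ex {m : ℕ} (b : Fin m → F) : ℕ → F := fun j => if h : j < m then b ⟨j, h⟩ else 0

lemma ex_lt {m : ℕ} (b : Fin m → F) {j : ℕ} (h : j < m) : ex b j = b ⟨j, h⟩ := dif_pos h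

lemma ex_ge {m : ℕ} (b : Fin m → F) {j : ℕ} (h : m ≤ j) : ex b j = 0 := dif_neg (by omega)

lemma sbL_apply (m : ℕ) (hm : 0 < m) (lam : F) (b : Fin m → F) (j : Fin m) :
    sbL m hm lam b j = if (j : ℕ) = 0 then lam * b ⟨m - 1, Nat.sub_lt hm Nat.one_pos⟩
      else b ⟨(j : ℕ) - 1, lt_of_le_of_lt (Nat.sub_le _ _) j.isLt⟩ := rfl

lemma sb_pow_apply (m : ℕ) (hm : 0 < m) (lam : F) (b : Fin m → F) :
    ∀ (k : ℕ), k < m → ∀ (j : ℕ) (hj : j < m),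
      ((sbL m hm lam ^ k) b) ⟨j, hj⟩ =
        if k ≤ j then ex b (j - k) else lam * ex b (j + m - k) := by
  intro k
  induction k with
  | zero =>
    intro _ j hj
    simp [ex_lt b hj]
  | succ k IH =>
    intro hk j hj
    have hk' : k < m := by omega
    have hstep : (sbL m hm lam ^ (k+1)) b = sbL m hm lam ((sbL m hm lam ^ k) b) := by
      rw [pow_succ']; rfl
    rw [hstep, sbL_apply]
    by_cases hj0 : j = 0
    · subst hj0
      rw [if_pos (show ((⟨0, hj⟩ : Fin m) : ℕ) = 0 from rfl)]
      rw [IH hk' (m-1) (by omega)]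
      rw [if_pos (show k ≤ m - 1 by omega)]
      rw [if_neg (show ¬ (k + 1 ≤ 0) by omega)]
      congr 2; omega
    · rw [if_neg hj0]
      rw [IH hk' (j-1) (by omega)]
      by_cases hkj : k + 1 ≤ j
      · rw [if_pos (show k ≤ j - 1 by omega), if_pos hkj]
        congr 1; omega
      · rw [if_neg (show ¬ (k ≤ j - 1) by omega), if_neg hkj]
        congr 2; omega

lemma sb_pow_m (m : ℕ) (hm : 0 < m) (lam : F) (b : Fin m → F) :
    (sbL m hm lam ^ m) b = lam • b := by
  funext j
  have h2 : sbL m hm lam ^ ((m-1)+1) = sbL m hm lam * sbL m hm lam ^ (m-1) := pow_succ' _ _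
  rw [show (m-1)+1 = m from by omega] at h2
  have hstep : (sbL m hm lam ^ m) b = sbL m hm lam ((sbL m hm lam ^ (m-1)) b) := by
    rw [h2]; rfl
  rw [hstep, sbL_apply]
  by_cases hj0 : (j : ℕ) = 0
  · rw [if_pos hj0]
    rw [sb_pow_apply m hm lam b (m-1) (by omega) (m-1) (by omega)]
    rw [if_pos (le_refl _)]
    rw [show m - 1 - (m-1) = 0 from by omega, ex_lt b hm]
    simp only [Pi.smul_apply, smul_eq_mul]
    congr 1
    exact congrArg b (Fin.ext hj0.symm)
  · rw [if_neg hj0]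
    rw [sb_pow_apply m hm lam b (m-1) (by omega) ((j:ℕ)-1) (by omega)]
    have hj1 : 1 ≤ (j : ℕ) := by omega
    have hjm : (j : ℕ) < m := j.isLt
    rw [if_neg (show ¬ (m - 1 ≤ (j:ℕ) - 1) by omega)]
    rw [show (j:ℕ) - 1 + m - (m - 1) = (j:ℕ) from by omega, ex_lt b hjm]
    simp only [Pi.smul_apply, smul_eq_mul]

noncomputable def rho {m : ℕ} (b : Fin m → F) : Polynomial F :=
  ∑ j ∈ Finset.range m, C (ex b j) * X ^ j

lemma coeff_rho {m : ℕ} (b : Fin m → F) (n : ℕ) : (rho b).coeff n = ex b n := by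
  rw [rho, Polynomial.finset_sum_coeff]
  simp only [Polynomial.coeff_C_mul, Polynomial.coeff_X_pow, mul_ite, mul_one, mul_zero]
  rw [Finset.sum_ite_eq (Finset.range m) n (fun j => ex b j)]
  by_cases h : n < m
  · rw [if_pos (Finset.mem_range.mpr h)]
  · rw [if_neg (fun hc => h (Finset.mem_range.mp hc)), ex_ge b (by omega)]

lemma rho_eq_zero_iff {m : ℕ} (b : Fin m → F) : rho b = 0 ↔ b = 0 := by
  constructor
  · intro h
    funext j
    have := coeff_rho b (j : ℕ)
    rw [h, Polynomial.coeff_zero, ex_lt b j.isLt] at this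
    simpa using this.symm
  · intro h
    subst h
    simp [rho, ex, Pi.zero_apply]

lemma natDegree_rho_le {m : ℕ} (hm : 0 < m) (b : Fin m → F) : (rho b).natDegree ≤ m - 1 := by
  rw [Polynomial.natDegree_le_iff_coeff_eq_zero]
  intro N hN
  rw [coeff_rho, ex_ge b (by omega)]

lemma rho_smul {m : ℕ} (r : F) (b : Fin m → F) : rho (r • b) = C r * rho b := by
  rw [rho, rho, Finset.mul_sum]
  refine Finset.sum_congr rfl fun j hj => ?_
  have : ex (r • b) j = r * ex b j := by
    by_cases h : j < m
    · rw [ex_lt _ h, ex_lt b h]; simp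
    · rw [ex_ge _ (by omega), ex_ge b (by omega), mul_zero]
  rw [this, map_mul, mul_assoc]

lemma sum_peel_zero {m : ℕ} (hm : 0 < m) (g : ℕ → Polynomial F) :
    ∑ j ∈ Finset.range m, g j = ∑ j ∈ Finset.range (m-1), g (j+1) + g 0 := by
  have h := Finset.sum_range_succ' g (m-1)
  rwa [show m-1+1 = m from by omega] at h

lemma sum_peel_last {m : ℕ} (hm : 0 < m) (g : ℕ → Polynomial F) :
    ∑ j ∈ Finset.range m, g j = ∑ j ∈ Finset.range (m-1), g j + g (m-1) := by
  have h := Finset.sum_range_succ g (m-1)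
  rwa [show m-1+1 = m from by omega] at h

lemma rho_sb {m : ℕ} (hm : 0 < m) (lam : F) (b : Fin m → F) :
    rho (sbL m hm lam b) = X * rho b - C (ex b (m-1)) * (X ^ m - C lam) := by
  have h1 : rho (sbL m hm lam b)
      = ∑ j ∈ Finset.range (m-1), C (ex (sbL m hm lam b) (j+1)) * X ^ (j+1)
        + C (ex (sbL m hm lam b) 0) := by
    rw [rho, sum_peel_zero hm]
    simp
  have h2 : X * rho b = ∑ j ∈ Finset.range (m-1), C (ex b j) * X ^ (j+1)
        + C (ex b (m-1)) * X ^ m := by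
    rw [rho, Finset.mul_sum, sum_peel_last hm (g := fun j => X * (C (ex b j) * X ^ j))]
    congr 1
    · refine Finset.sum_congr rfl fun j hj => by ring
    · calc X * (C (ex b (m-1)) * X ^ (m-1)) = C (ex b (m-1)) * X ^ (m-1+1) := by ring
        _ = C (ex b (m-1)) * X ^ m := by rw [show m-1+1 = m from by omega]
  have hex0 : ex (sbL m hm lam b) 0 = lam * ex b (m-1) := by
    rw [ex_lt _ hm, ex_lt b (by omega)]
    exact sbL_apply m hm lam b ⟨0, hm⟩ |>.trans (if_pos rfl)
  have hexs : ∀ j ∈ Finset.range (m-1), ex (sbL m hm lam b) (j+1) = ex b j := by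
    intro j hj
    have hjm : j + 1 < m := by have := Finset.mem_range.mp hj; omega
    rw [ex_lt _ hjm, ex_lt b (by omega)]
    rw [sbL_apply]
    rw [if_neg (by simp)]
    exact congrArg b (by ext; simp)
  rw [h1, Finset.sum_congr rfl (fun j hj => by rw [hexs j hj]), hex0, h2, map_mul]
  ring

lemma rho_sb_pow_dvd {m : ℕ} (hm : 0 < m) (lam : F) (b : Fin m → F) (n : ℕ) :
    (X ^ m - C lam) ∣ rho ((sbL m hm lam ^ n) b) - X ^ n * rho b := by
  induction n with
  | zero => simp
  | succ n IH =>
    have hstep : (sbL m hm lam ^ (n+1)) b = sbL m hm lam ((sbL m hm lam ^ n) b) := by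
      rw [pow_succ']; rfl
    rw [hstep, rho_sb hm lam]
    have key : X * rho ((sbL m hm lam ^ n) b) - C (ex ((sbL m hm lam ^ n) b) (m-1)) * (X ^ m - C lam)
        - X ^ (n+1) * rho b
        = X * (rho ((sbL m hm lam ^ n) b) - X ^ n * rho b)
          + (- C (ex ((sbL m hm lam ^ n) b) (m-1))) * (X ^ m - C lam) := by ring
    rw [key]
    exact dvd_add (Dvd.dvd.mul_left IH X) (Dvd.intro_left _ rfl)

lemma rho_aeval_dvd {m : ℕ} (hm : 0 < m) (lam : F) (b : Fin m → F) (p : Polynomial F) :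
    (X ^ m - C lam) ∣ rho (Polynomial.aeval (sbL m hm lam) p b) - p * rho b := by
  induction p using Polynomial.induction_on' with
  | add p q hp hq =>
    have : rho (Polynomial.aeval (sbL m hm lam) (p + q) b) - (p + q) * rho b
        = (rho (Polynomial.aeval (sbL m hm lam) p b) - p * rho b)
          + (rho (Polynomial.aeval (sbL m hm lam) q b) - q * rho b) := by
      rw [map_add]
      have : (Polynomial.aeval (sbL m hm lam) p + Polynomial.aeval (sbL m hm lam) q) b
          = Polynomial.aeval (sbL m hm lam) p b + Polynomial.aeval (sbL m hm lam) q b := rfl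
      rw [this]
      have hradd : rho (Polynomial.aeval (sbL m hm lam) p b + Polynomial.aeval (sbL m hm lam) q b)
          = rho (Polynomial.aeval (sbL m hm lam) p b) + rho (Polynomial.aeval (sbL m hm lam) q b) := by
        rw [rho, rho, rho, ← Finset.sum_add_distrib]
        refine Finset.sum_congr rfl fun j hj => ?_
        have : ex (Polynomial.aeval (sbL m hm lam) p b + Polynomial.aeval (sbL m hm lam) q b) j
            = ex (Polynomial.aeval (sbL m hm lam) p b) j + ex (Polynomial.aeval (sbL m hm lam) q b) j := by
          by_cases h : j < m
          · rw [ex_lt _ h, ex_lt _ h, ex_lt _ h]; rfl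
          · rw [ex_ge _ (by omega), ex_ge _ (by omega), ex_ge _ (by omega), add_zero]
        rw [this, map_add]; ring
      rw [hradd]; ring
    rw [this]
    exact dvd_add hp hq
  | monomial n r =>
    have h1 : Polynomial.aeval (sbL m hm lam) (Polynomial.monomial n r) b
        = r • ((sbL m hm lam ^ n) b) := by
      rw [Polynomial.aeval_monomial]
      have : (algebraMap F (Module.End F (Fin m → F)) r * sbL m hm lam ^ n) b
          = (algebraMap F (Module.End F (Fin m → F)) r) ((sbL m hm lam ^ n) b) := rfl
      rw [this, Module.algebraMap_end_apply]
    rw [h1, rho_smul]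
    have h2 : (Polynomial.monomial n r : Polynomial F) = C r * X ^ n := by
      rw [Polynomial.C_mul_X_pow_eq_monomial]
    rw [h2]
    have key : C r * rho ((sbL m hm lam ^ n) b) - C r * X ^ n * rho b
        = C r * (rho ((sbL m hm lam ^ n) b) - X ^ n * rho b) := by ring
    rw [key]
    exact Dvd.dvd.mul_left (rho_sb_pow_dvd hm lam b n) _

lemma idA {m : ℕ} (hm : 0 < m) (lam : F) (a b : Fin m → F) (j : ℕ) (hj : j < m) :
    ∑ j' ∈ Finset.range m, (if j' ≤ j then C (ex a j * ex b j') * X ^ (m-1-j+j')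
        else C (lam * (ex a j * ex b j')) * X ^ (j'-j-1))
      = ∑ k ∈ Finset.range m, C (ex a j * ex ((sbL m hm lam ^ k) b) j) * X ^ (m-1-k) := by
  refine Finset.sum_nbij' (fun j' => if j' ≤ j then j - j' else j + m - j')
    (fun k => if k ≤ j then j - k else j + m - k) ?_ ?_ ?_ ?_ ?_
  · intro j' hj'
    have := Finset.mem_range.mp hj'
    by_cases h : j' ≤ j <;> simp only [h, if_pos, if_neg, if_true, if_false] <;>
      exact Finset.mem_range.mpr (by omega)
  · intro k hk
    have := Finset.mem_range.mp hk
    by_cases h : k ≤ j <;> simp only [h, if_pos, if_neg, if_true, if_false] <;>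
      exact Finset.mem_range.mpr (by omega)
  · intro j' hj'
    have := Finset.mem_range.mp hj'
    by_cases h : j' ≤ j
    · rw [if_pos h, if_pos (show j - j' ≤ j by omega)]; omega
    · rw [if_neg h, if_neg (show ¬ (j + m - j' ≤ j) by omega)]; omega
  · intro k hk
    have := Finset.mem_range.mp hk
    by_cases h : k ≤ j
    · rw [if_pos h, if_pos (show j - k ≤ j by omega)]; omega
    · rw [if_neg h, if_neg (show ¬ (j + m - k ≤ j) by omega)]; omega
  · intro j' hj'
    have hj'm := Finset.mem_range.mp hj'
    by_cases h : j' ≤ j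
    · rw [if_pos h, if_pos h]
      have hk : j - j' < m := by omega
      rw [ex_lt ((sbL m hm lam ^ (j - j')) b) hj, sb_pow_apply m hm lam b (j - j') hk j hj]
      rw [if_pos (show j - j' ≤ j by omega)]
      rw [show j - (j - j') = j' from by omega]
      rw [show m - 1 - (j - j') = m - 1 - j + j' from by omega]
    · rw [if_neg h, if_neg h]
      have hk : j + m - j' < m := by omega
      rw [ex_lt ((sbL m hm lam ^ (j + m - j')) b) hj, sb_pow_apply m hm lam b (j + m - j') hk j hj]
      rw [if_neg (show ¬ (j + m - j' ≤ j) by omega)]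
      rw [show j + m - (j + m - j') = j' from by omega]
      rw [show m - 1 - (j + m - j') = j' - j - 1 from by omega]
      congr 1
      simp only [map_mul]
      ring

lemma reflect_rho {m : ℕ} (hm : 0 < m) (a : Fin m → F) :
    Polynomial.reflect (m-1) (rho a) = ∑ j ∈ Finset.range m, C (ex a j) * X ^ (m-1-j) := by
  rw [rho]
  have : ∀ s : Finset ℕ, Polynomial.reflect (m-1) (∑ j ∈ s, C (ex a j) * X ^ j)
      = ∑ j ∈ s, C (ex a j) * X ^ (Polynomial.revAt (m-1) j) := by
    intro s
    induction s using Finset.cons_induction with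
    | empty => simp
    | cons i s his IH =>
      rw [Finset.sum_cons, Finset.sum_cons, Polynomial.reflect_add,
        Polynomial.reflect_C_mul_X_pow, IH]
  rw [this]
  refine Finset.sum_congr rfl fun j hj => ?_
  rw [Polynomial.revAt_le (show j ≤ m - 1 from by have := Finset.mem_range.mp hj; omega)]

lemma key_dvd {m : ℕ} (hm : 0 < m) (lam : F) (a b : Fin m → F)
    (h : ∀ k, k < m → ∑ j : Fin m, a j * ((sbL m hm lam ^ k) b) j = 0) :
    (X ^ m - C lam) ∣ Polynomial.reflect (m-1) (rho a) * rho b := by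
  have expand : Polynomial.reflect (m-1) (rho a) * rho b
      = ∑ j ∈ Finset.range m, ∑ j' ∈ Finset.range m,
          C (ex a j * ex b j') * X ^ (m-1-j) * X ^ j' := by
    rw [reflect_rho hm a, rho, Finset.sum_mul_sum]
    refine Finset.sum_congr rfl fun j hj => Finset.sum_congr rfl fun j' hj' => by
      rw [map_mul]; ring
  set Q : Polynomial F := ∑ j ∈ Finset.range m, ∑ j' ∈ Finset.range m,
      (if j < j' then C (ex a j * ex b j') * X ^ (j'-j-1) else 0) with hQ
  have main : Polynomial.reflect (m-1) (rho a) * rho b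
      = (X ^ m - C lam) * Q
        + ∑ j ∈ Finset.range m, ∑ k ∈ Finset.range m,
            C (ex a j * ex ((sbL m hm lam ^ k) b) j) * X ^ (m-1-k) := by
    rw [expand, hQ, Finset.mul_sum]
    rw [← Finset.sum_add_distrib]
    refine Finset.sum_congr rfl fun j hj => ?_
    rw [Finset.mul_sum, ← idA hm lam a b j (Finset.mem_range.mp hj)]
    rw [← Finset.sum_add_distrib]
    refine Finset.sum_congr rfl fun j' hj' => ?_
    have hjm := Finset.mem_range.mp hj
    have hj'm := Finset.mem_range.mp hj'
    by_cases hlt : j < j'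
    · rw [if_neg (show ¬ (j' ≤ j) by omega), if_pos hlt]
      have hexp : m - 1 - j + j' = m + (j' - j - 1) := by omega
      rw [mul_assoc, ← pow_add, hexp, pow_add]
      simp only [map_mul]
      ring
    · rw [if_pos (show j' ≤ j by omega), if_neg hlt]
      rw [mul_zero, zero_add, mul_assoc, ← pow_add]
  have hzero : ∑ j ∈ Finset.range m, ∑ k ∈ Finset.range m,
      C (ex a j * ex ((sbL m hm lam ^ k) b) j) * X ^ (m-1-k) = 0 := by
    rw [Finset.sum_comm]
    refine Finset.sum_eq_zero fun k hk => ?_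
    have hkm := Finset.mem_range.mp hk
    rw [← Finset.sum_mul, ← map_sum]
    have : ∑ j ∈ Finset.range m, ex a j * ex ((sbL m hm lam ^ k) b) j
        = ∑ j : Fin m, a j * ((sbL m hm lam ^ k) b) j := by
      rw [← Fin.sum_univ_eq_sum_range (fun j => ex a j * ex ((sbL m hm lam ^ k) b) j) m]
      refine Finset.sum_congr rfl fun j _ => ?_
      rw [ex_lt a j.isLt, ex_lt _ j.isLt]
    rw [this, h k hkm, map_zero, zero_mul]
  rw [main, hzero, add_zero]
  exact Dvd.intro Q rfl

lemma natDegree_reflect_le' {p : Polynomial F} {N : ℕ} (h : p.natDegree ≤ N) :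
    (Polynomial.reflect N p).natDegree ≤ N := by
  rw [Polynomial.natDegree_le_iff_coeff_eq_zero]
  intro M hM
  rw [Polynomial.coeff_reflect]
  have hrev : Polynomial.revAt N M = M := by
    show (if M ≤ N then N - M else M) = M
    rw [if_neg (show ¬ (M ≤ N) by omega)]
  rw [hrev]
  exact Polynomial.coeff_eq_zero_of_natDegree_lt (by omega)

lemma reflect_X_pow_sub_C (m : ℕ) (hm : 0 < m) (lam : F) :
    Polynomial.reflect m ((X : Polynomial F) ^ m - C lam) = 1 - C lam * X ^ m := by
  ext i
  rw [Polynomial.coeff_reflect]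
  simp only [Polynomial.coeff_sub, Polynomial.coeff_X_pow, Polynomial.coeff_C,
    Polynomial.coeff_one, Polynomial.coeff_C_mul]
  by_cases h1 : i ≤ m
  · rw [Polynomial.revAt_le h1]
    by_cases hi0 : i = 0
    · subst hi0
      rw [if_pos (by omega), if_neg (by omega), if_pos rfl, if_neg (by omega)]
      simp
    · by_cases him : i = m
      · subst him
        rw [if_neg (by omega), if_pos (by omega), if_neg hi0, if_pos rfl]
        simp
      · rw [if_neg (by omega), if_neg (by omega), if_neg hi0, if_neg him]
        simp
  · have hrev : Polynomial.revAt m i = i := by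
      show (if i ≤ m then m - i else i) = i
      rw [if_neg (show ¬ (i ≤ m) by omega)]
    rw [hrev]
    have hi0 : i ≠ 0 := by omega
    have him : i ≠ m := by omega
    simp [hi0, him]

lemma singleBlock {m : ℕ} (hm : 0 < m) {lam : F} (h0 : lam ≠ 0) (h2 : lam ≠ lam⁻¹)
    (a : Fin m → F)
    (hstar : ∀ p : Polynomial F,
      ∑ j : Fin m, a j * (Polynomial.aeval (sbL m hm lam) p a) j = 0) :
    a = 0 := by
  classical
  by_contra hne
  have hA0 : rho a ≠ 0 := fun h => hne ((rho_eq_zero_iff a).mp h)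
  set f : Polynomial F := X ^ m - C lam with hf
  have hfmonic : f.Monic := Polynomial.monic_X_pow_sub_C lam (by omega)
  have hf0 : f ≠ 0 := hfmonic.ne_zero
  -- master divisibility
  have hmaster : ∀ p : Polynomial F,
      f ∣ Polynomial.reflect (m-1) (rho a) * (p * rho a) := by
    intro p
    have hb : ∀ k, k < m →
        ∑ j : Fin m, a j * ((sbL m hm lam ^ k) (Polynomial.aeval (sbL m hm lam) p a)) j = 0 := by
      intro k hk
      have h := hstar (X ^ k * p)
      have he : Polynomial.aeval (sbL m hm lam) (X ^ k * p) a
          = (sbL m hm lam ^ k) (Polynomial.aeval (sbL m hm lam) p a) := by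
        rw [map_mul, map_pow, Polynomial.aeval_X]
        rfl
      rwa [he] at h
    have h1 := key_dvd hm lam a (Polynomial.aeval (sbL m hm lam) p a) hb
    have h2' := rho_aeval_dvd hm lam a p
    have : Polynomial.reflect (m-1) (rho a) * (p * rho a)
        = Polynomial.reflect (m-1) (rho a) * rho (Polynomial.aeval (sbL m hm lam) p a)
          - Polynomial.reflect (m-1) (rho a)
            * (rho (Polynomial.aeval (sbL m hm lam) p a) - p * rho a) := by ring
    rw [this]
    exact dvd_sub h1 (h2'.mul_left _)
  -- gcd
  set g : Polynomial F := EuclideanDomain.gcd (rho a) f with hg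
  have hgA : g ∣ rho a := EuclideanDomain.gcd_dvd_left _ _
  have hgf : g ∣ f := EuclideanDomain.gcd_dvd_right _ _
  have hg0 : g ≠ 0 := fun h => hA0 (by
    have := EuclideanDomain.gcd_eq_zero_iff.mp (hg ▸ h)
    exact this.1)
  have hfg : f ∣ Polynomial.reflect (m-1) (rho a) * g := by
    rw [hg, EuclideanDomain.gcd_eq_gcd_ab (rho a) f]
    have : Polynomial.reflect (m-1) (rho a)
        * (rho a * EuclideanDomain.gcdA (rho a) f + f * EuclideanDomain.gcdB (rho a) f)
        = Polynomial.reflect (m-1) (rho a) * (EuclideanDomain.gcdA (rho a) f * rho a)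
          + (Polynomial.reflect (m-1) (rho a) * EuclideanDomain.gcdB (rho a) f) * f := by ring
    rw [this]
    exact dvd_add (hmaster _) (Dvd.intro_left _ rfl)
  obtain ⟨hp, hfh⟩ := hgf
  have hp0 : hp ≠ 0 := by
    intro h; rw [h, mul_zero] at hfh; exact hf0 hfh
  have hHr : hp ∣ Polynomial.reflect (m-1) (rho a) := by
    have : g * hp ∣ g * Polynomial.reflect (m-1) (rho a) := by
      rw [← hfh, mul_comm g (Polynomial.reflect (m-1) (rho a))]
      exact hfg
    exact (mul_dvd_mul_iff_left hg0).mp this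
  obtain ⟨u, hAu⟩ := hgA
  have hu0 : u ≠ 0 := by
    intro h; rw [h, mul_zero] at hAu; exact hA0 hAu
  -- degrees
  have dA : (rho a).natDegree ≤ m - 1 := natDegree_rho_le hm a
  set k : ℕ := g.natDegree with hkdef
  have hk : k ≤ m - 1 := le_trans (Polynomial.natDegree_le_of_dvd ⟨u, hAu⟩ hA0) dA
  have hdf : f.natDegree = m := Polynomial.natDegree_X_pow_sub_C
  have hdgu : (rho a).natDegree = k + u.natDegree := by
    rw [hAu, Polynomial.natDegree_mul hg0 hu0]
  have du : u.natDegree ≤ m - 1 - k := by omega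
  have dh : hp.natDegree = m - k := by
    have : f.natDegree = k + hp.natDegree := by
      rw [hfh, Polynomial.natDegree_mul hg0 hp0]
    omega
  -- reflect splits
  have split1 : Polynomial.reflect (m-1) (rho a)
      = Polynomial.reflect k g * Polynomial.reflect (m-1-k) u := by
    have h := Polynomial.reflect_mul g u (le_refl k) du
    rw [show k + (m-1-k) = m-1 from by omega] at h
    rw [hAu, h]
  have split2 : Polynomial.reflect k g * Polynomial.reflect (m-k) hp
      = Polynomial.reflect m f := by
    have h := Polynomial.reflect_mul g hp (le_refl k) (le_of_eq dh)
    rw [show k + (m-k) = m from by omega] at h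
    rw [← hfh] at h
    exact h.symm
  -- coprimality
  have hrefl_dvd : Polynomial.reflect k g ∣ (X ^ m - C lam⁻¹ : Polynomial F) := by
    refine ⟨C (-lam⁻¹) * Polynomial.reflect (m-k) hp, ?_⟩
    have e0 : Polynomial.reflect k g * (C (-lam⁻¹) * Polynomial.reflect (m-k) hp)
        = C (-lam⁻¹) * (Polynomial.reflect k g * Polynomial.reflect (m-k) hp) := by ring
    rw [e0, split2, hf, reflect_X_pow_sub_C m hm lam]
    have e1 : C (-lam⁻¹) * (1 - C lam * X ^ m : Polynomial F)
        = C (lam⁻¹ * lam) * X ^ m - C lam⁻¹ := by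
      simp only [map_neg, map_mul]; ring
    rw [e1, inv_mul_cancel₀ h0, map_one, one_mul]
  have hcop2 : IsCoprime (f : Polynomial F) (X ^ m - C lam⁻¹) := by
    set w : F := (lam - lam⁻¹)⁻¹ with hw
    have hwne : lam - lam⁻¹ ≠ 0 := sub_ne_zero.mpr h2
    refine ⟨-C w, C w, ?_⟩
    have : (-C w) * f + C w * (X ^ m - C lam⁻¹) = C (w * (lam - lam⁻¹)) := by
      rw [hf]; simp only [map_mul, map_sub]; ring
    rw [this, hw, inv_mul_cancel₀ hwne, map_one]
  have hcop3 : IsCoprime hp (Polynomial.reflect k g) := by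
    have hdvd1 : hp ∣ f := ⟨g, by rw [hfh]; ring⟩
    exact (hcop2.of_isCoprime_of_dvd_left hdvd1).of_isCoprime_of_dvd_right hrefl_dvd
  have hdr : hp ∣ Polynomial.reflect (m-1-k) u :=
    hcop3.dvd_of_dvd_mul_left (by rw [← split1]; exact hHr)
  have hru : Polynomial.reflect (m-1-k) u = 0 := by
    by_contra hru
    have h1 := Polynomial.natDegree_le_of_dvd hdr hru
    have h2'' := natDegree_reflect_le' du
    omega
  have hu : u = 0 := by
    ext n
    have := congrArg (fun q : Polynomial F => q.coeff (Polynomial.revAt (m-1-k) n)) hru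
    simpa [Polynomial.coeff_reflect, Polynomial.revAt_invol] using this
  rw [hu, mul_zero] at hAu
  exact hA0 hAu

def TL {ℓ : ℕ} (m : Fin ℓ → ℕ) (hm : ∀ i, 0 < m i) (Λ : Fin ℓ → F) :
    (∀ i, Fin (m i) → F) →ₗ[F] (∀ i, Fin (m i) → F) where
  toFun c := fun i => sbL (m i) (hm i) (Λ i) (c i)
  map_add' x y := by funext i; exact map_add _ _ _
  map_smul' r x := by funext i; exact (sbL (m i) (hm i) (Λ i)).map_smul r (x i)

lemma mtShift_eq_TL {ℓ : ℕ} (m : Fin ℓ → ℕ) (hm : ∀ i, 0 < m i) (Λ : Fin ℓ → F)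
    (c : ∀ i, Fin (m i) → F) : mtShift m hm Λ c = TL m hm Λ c := rfl

lemma TL_pow_block {ℓ : ℕ} (m : Fin ℓ → ℕ) (hm : ∀ i, 0 < m i) (Λ : Fin ℓ → F)
    (n : ℕ) (c : ∀ i, Fin (m i) → F) (i : Fin ℓ) :
    ((TL m hm Λ ^ n) c) i = ((sbL (m i) (hm i) (Λ i)) ^ n) (c i) := by
  induction n with
  | zero => rfl
  | succ n IH =>
    have h1 : (TL m hm Λ ^ (n+1)) c = TL m hm Λ ((TL m hm Λ ^ n) c) := by
      rw [pow_succ']; rfl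
    have h2 : ((sbL (m i) (hm i) (Λ i)) ^ (n+1)) (c i)
        = sbL (m i) (hm i) (Λ i) (((sbL (m i) (hm i) (Λ i)) ^ n) (c i)) := by
      rw [pow_succ']; rfl
    rw [h1, h2]
    show sbL (m i) (hm i) (Λ i) (((TL m hm Λ ^ n) c) i) = _
    rw [IH]

lemma TL_aeval_block {ℓ : ℕ} (m : Fin ℓ → ℕ) (hm : ∀ i, 0 < m i) (Λ : Fin ℓ → F)
    (p : Polynomial F) (c : ∀ i, Fin (m i) → F) (i : Fin ℓ) :
    (Polynomial.aeval (TL m hm Λ) p c) i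
      = Polynomial.aeval (sbL (m i) (hm i) (Λ i)) p (c i) := by
  induction p using Polynomial.induction_on' with
  | add p q hp hq =>
    rw [map_add, map_add]
    have h3 : (Polynomial.aeval (TL m hm Λ) p + Polynomial.aeval (TL m hm Λ) q) c
        = Polynomial.aeval (TL m hm Λ) p c + Polynomial.aeval (TL m hm Λ) q c := rfl
    rw [h3]
    show (Polynomial.aeval (TL m hm Λ) p c) i + (Polynomial.aeval (TL m hm Λ) q c) i = _
    rw [hp, hq]; rfl
  | monomial n r =>
    rw [Polynomial.aeval_monomial, Polynomial.aeval_monomial]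
    have h1 : ((algebraMap F (Module.End F (∀ i, Fin (m i) → F)) r) * (TL m hm Λ) ^ n) c
        = r • ((TL m hm Λ ^ n) c) := by
      rw [Module.End.mul_apply, Module.algebraMap_end_apply]
    have h2 : ((algebraMap F (Module.End F (Fin (m i) → F)) r) * (sbL (m i) (hm i) (Λ i)) ^ n) (c i)
        = r • (((sbL (m i) (hm i) (Λ i)) ^ n) (c i)) := by
      rw [Module.End.mul_apply, Module.algebraMap_end_apply]
    rw [h1, h2]
    show r • (((TL m hm Λ ^ n) c) i) = _
    rw [TL_pow_block]

lemma aeval_sbL_f (m : ℕ) (hm : 0 < m) (lam : F) :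
    Polynomial.aeval (sbL m hm lam) ((X : Polynomial F) ^ m - C lam) = 0 := by
  rw [map_sub, map_pow, Polynomial.aeval_X, Polynomial.aeval_C]
  refine LinearMap.ext fun b => ?_
  rw [LinearMap.sub_apply, LinearMap.zero_apply, sb_pow_m, Module.algebraMap_end_apply, sub_self]


lemma code_aeval_mem {ℓ : ℕ} (m : Fin ℓ → ℕ) (hm : ∀ i, 0 < m i) (Λ : Fin ℓ → F)
    (Ccode : Submodule F (∀ i, Fin (m i) → F))
    (hC : ∀ c ∈ Ccode, mtShift m hm Λ c ∈ Ccode) (p : Polynomial F)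
    {c : ∀ i, Fin (m i) → F} (hc : c ∈ Ccode) :
    Polynomial.aeval (TL m hm Λ) p c ∈ Ccode := by
  have hpow : ∀ n, (TL m hm Λ ^ n) c ∈ Ccode := by
    intro n
    induction n with
    | zero => simpa using hc
    | succ n IH =>
      have h1 : (TL m hm Λ ^ (n+1)) c = TL m hm Λ ((TL m hm Λ ^ n) c) := by
        rw [pow_succ']; rfl
      rw [h1, ← mtShift_eq_TL]
      exact hC _ IH
  induction p using Polynomial.induction_on' with
  | add p q hp hq =>
    rw [map_add, LinearMap.add_apply]
    exact Submodule.add_mem _ hp hq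
  | monomial n r =>
    rw [Polynomial.aeval_monomial]
    have h1 : ((algebraMap F (Module.End F (∀ i, Fin (m i) → F)) r) * (TL m hm Λ) ^ n) c
        = r • ((TL m hm Λ ^ n) c) := by
      rw [Module.End.mul_apply, Module.algebraMap_end_apply]
    rw [h1]
    exact Submodule.smul_mem _ r (hpow n)

end MTAux

open Polynomial in
/-- If `λ_i ≠ λ_i^{-1}` for all `i` and the polynomials `x^{m_i} − λ_i` are pairwise
coprime in `F_q[x]`, then every `Λ`-multi-twisted code of length `n` over `F_q` is LCD. -/
theorem multiTwisted_LCD_of_pairwise_coprime (F : Type*) [Field F] [Fintype F]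
    (ℓ : ℕ) (m : Fin ℓ → ℕ) (hm : ∀ i, 0 < m i)
    (hco : ∀ i, Nat.Coprime (m i) (Fintype.card F))
    (Λ : Fin ℓ → F) (hΛ : ∀ i, Λ i ≠ 0) (hΛ2 : ∀ i, Λ i ≠ (Λ i)⁻¹)
    (hcop : ∀ i j, i ≠ j →
      IsCoprime ((X : Polynomial F) ^ m i - C (Λ i)) ((X : Polynomial F) ^ m j - C (Λ j)))
    (Ccode : Submodule F (∀ i, Fin (m i) → F))
    (hC : ∀ c ∈ Ccode, mtShift m hm Λ c ∈ Ccode) :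
    Ccode ⊓ mtDual Ccode = ⊥ := by
  classical
  rw [eq_bot_iff]
  intro c hc
  obtain ⟨hc1, hc2⟩ := Submodule.mem_inf.mp hc
  rw [Submodule.mem_bot]
  funext i
  show c i = 0
  refine singleBlock (hm i) (hΛ i) (hΛ2 i) (c i) ?_
  intro p
  have hcop' : IsCoprime ((X : Polynomial F) ^ m i - C (Λ i))
      (∏ j ∈ Finset.univ.erase i, ((X : Polynomial F) ^ m j - C (Λ j))) :=
    IsCoprime.prod_right fun j hj => hcop i j (Finset.ne_of_mem_erase hj).symm
  obtain ⟨s, t, hst⟩ := hcop'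
  set Pp : Polynomial F := ∏ j ∈ Finset.univ.erase i, ((X : Polynomial F) ^ m j - C (Λ j))
    with hPp
  have hannj : ∀ j : Fin ℓ, j ≠ i →
      Polynomial.aeval (sbL (m j) (hm j) (Λ j)) (t * Pp) = 0 := by
    intro j hji
    obtain ⟨w, hw⟩ := Finset.dvd_prod_of_mem
      (fun j => ((X : Polynomial F) ^ m j - C (Λ j)))
      (Finset.mem_erase.mpr ⟨hji, Finset.mem_univ j⟩)
    rw [hPp, hw, map_mul, map_mul, aeval_sbL_f (m j) (hm j) (Λ j), zero_mul, mul_zero]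
  have hanni : Polynomial.aeval (sbL (m i) (hm i) (Λ i)) (t * Pp) = 1 := by
    have h0 := congrArg (Polynomial.aeval (sbL (m i) (hm i) (Λ i))) hst
    simp only [map_add, map_mul, map_one] at h0
    rw [aeval_sbL_f (m i) (hm i) (Λ i), mul_zero, zero_add] at h0
    rw [map_mul]
    exact h0
  have hd : Polynomial.aeval (TL m hm Λ) ((t * Pp) * p) c ∈ Ccode :=
    code_aeval_mem m hm Λ Ccode hC _ hc1
  have hblock : ∀ i' : Fin ℓ, (Polynomial.aeval (TL m hm Λ) ((t * Pp) * p) c) i'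
      = Polynomial.aeval (sbL (m i') (hm i') (Λ i')) (t * Pp)
          (Polynomial.aeval (sbL (m i') (hm i') (Λ i')) p (c i')) := by
    intro i'
    rw [TL_aeval_block, map_mul, Module.End.mul_apply]
  have hmain := hc2 _ hd
  rw [mtInner] at hmain
  rw [Finset.sum_eq_single i (fun i' _ hne => Finset.sum_eq_zero fun j _ => by
      rw [hblock i', hannj i' hne, LinearMap.zero_apply, Pi.zero_apply, mul_zero])
    (fun h => absurd (Finset.mem_univ i) h)] at hmain
  rw [hblock i, hanni, Module.End.one_apply] at hmain
  exact hmain
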